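/- Let K be a distributive lattice. Then the canonical map ι_K : K → V(K) into the valuation ring of K is injective. -/

import Mathlib

/-- The subgroup of relations defining the valuation ring of a distributive
lattice `K`. -/
def VRelLat (K : Type*) [DistribLattice K] : AddSubgroup (FreeAbelianGroup K) :=
  AddSubgroup.closure
    {g : FreeAbelianGroup K | ∃ x y : K,
      g = FreeAbelianGroup.of (x ⊔ y) + FreeAbelianGroup.of (x ⊓ y)
        - FreeAbelianGroup.of x - FreeAbelianGroup.of y}

/-- The valuation ring (as an additive group) of a distributive lattice `K`. -/
abbrev VLat (K : Type*) [DistribLattice K] : Type _ :=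
  FreeAbelianGroup K ⧸ VRelLat K

/-- The universal valuation `ι_K : K → V(K)`. -/
def iotaLat {K : Type*} [DistribLattice K] (x : K) : VLat K :=
  QuotientAddGroup.mk (FreeAbelianGroup.of x)

open Order in
/-- If `¬ a ≤ b` then `ι a ≠ ι b`. -/
lemma iotaLat_ne_of_not_le {K : Type*} [DistribLattice K] {a b : K} (hab : ¬ a ≤ b) :
    iotaLat a ≠ iotaLat b := by
  classical
  -- Embed `K` in a bounded distributive lattice.
  set L := WithTop (WithBot K)
  let e : K → L := fun z => ((z : WithBot K) : L)
  have he_le : ∀ {x y : K}, e x ≤ e y ↔ x ≤ y := by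
    intro x y
    simp only [e]; rw [WithTop.coe_le_coe, WithBot.coe_le_coe]
  have he_sup : ∀ x y : K, e (x ⊔ y) = e x ⊔ e y := by
    intro x y; simp only [e]; rw [WithBot.coe_sup, WithTop.coe_sup]
  have he_inf : ∀ x y : K, e (x ⊓ y) = e x ⊓ e y := by
    intro x y; simp only [e]; rw [WithBot.coe_inf, WithTop.coe_inf]
  -- Separate `a` (a principal filter) from `b` (a principal ideal) by a prime ideal.
  have hdisj : Disjoint ((PFilter.principal (e a) : PFilter L) : Set L)
      ((Ideal.principal (e b) : Ideal L) : Set L) := by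
    rw [Set.disjoint_left]
    intro z hz hz'
    have h1 : e a ≤ z := PFilter.mem_principal.mp hz
    have h2 : z ≤ e b := Ideal.mem_principal.mp hz'
    exact hab (he_le.mp (h1.trans h2))
  obtain ⟨J, hJprime, hIJ, hJF⟩ :=
    DistribLattice.prime_ideal_of_disjoint_filter_ideal hdisj
  have hbJ : e b ∈ J := hIJ (Ideal.mem_principal.mpr le_rfl)
  have haJ : e a ∉ J := Set.disjoint_left.mp hJF (PFilter.mem_principal.mpr le_rfl)
  -- The indicator valuation.
  let v : K → ℤ := fun z => if e z ∈ J then 0 else 1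
  let f : FreeAbelianGroup K →+ ℤ := FreeAbelianGroup.lift v
  have hrel : VRelLat K ≤ f.ker := by
    rw [VRelLat, AddSubgroup.closure_le]
    rintro g ⟨x, y, rfl⟩
    have hsup : e (x ⊔ y) ∈ J ↔ e x ∈ J ∧ e y ∈ J := by
      rw [he_sup]
      constructor
      · intro h
        exact ⟨J.lower le_sup_left h, J.lower le_sup_right h⟩
      · rintro ⟨h1, h2⟩; exact J.sup_mem h1 h2
    have hinf : e (x ⊓ y) ∈ J ↔ e x ∈ J ∨ e y ∈ J := by
      rw [he_inf]
      constructor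
      · intro h; exact hJprime.mem_or_mem h
      · rintro (h | h)
        · exact J.lower inf_le_left h
        · exact J.lower inf_le_right h
    simp only [AddMonoidHom.mem_ker, map_sub, map_add, FreeAbelianGroup.lift_apply_of, f, v]
    by_cases hx : e x ∈ J <;> by_cases hy : e y ∈ J <;>
      simp [hx, hy, hsup, hinf]
  intro h
  have : FreeAbelianGroup.of a - FreeAbelianGroup.of b ∈ VRelLat K := by
    rwa [iotaLat, iotaLat, QuotientAddGroup.eq_iff_sub_mem] at h
  have h0 : f (FreeAbelianGroup.of a - FreeAbelianGroup.of b) = 0 := hrel this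
  rw [map_sub, FreeAbelianGroup.lift_apply_of, FreeAbelianGroup.lift_apply_of] at h0
  simp only [v, if_neg haJ, if_pos hbJ] at h0
  norm_num at h0

theorem iotaLat_injective {K : Type*} [DistribLattice K] :
    Function.Injective (iotaLat (K := K)) := by
  intro a b h
  by_contra hne
  rcases not_and_or.mp (fun hc : a ≤ b ∧ b ≤ a => hne (le_antisymm hc.1 hc.2)) with hl | hl
  · exact iotaLat_ne_of_not_le hl h
  · exact iotaLat_ne_of_not_le hl h.symm
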